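/- (Conservation on a rectangle) Let X, Y ≥ 1 and let C(a,b) = (i(a,b), j(a,b), k(a,b), l(a,b)) ∈ {0,1}⁴ for 1 ≤ a ≤ X, 1 ≤ b ≤ Y be a family satisfying the edge compatibility i(a,b+1) = k(a,b) for b < Y and j(a+1,b) = l(a,b) for a < X, and such that L̂¹(i(a,b), j(a,b); k(a,b), l(a,b)) ≠ 0 in W for every (a,b). Then Σ_{a=1}^X i(a,1) + Σ_{b=1}^Y l(X,b) = Σ_{a=1}^X k(a,Y) + Σ_{b=1}^Y j(1,b); that is, the number of lines crossing the bottom and right boundaries of the rectangle equals the number crossing the top and left boundaries. -/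

import Mathlib

/-- Exponents of the indeterminates `b₁` (resp. `b₂`) appearing in a formal weight:
`e` for exponent zero (factor `1`), `pl` for the factor `bᵢ`, `mi` for the factor `1 - bᵢ`. -/
inductive Eps : Type
  | e : Eps
  | pl : Eps
  | mi : Eps
deriving DecidableEq

instance instFintypeEps : Fintype Eps :=
  ⟨{Eps.e, Eps.pl, Eps.mi}, fun x => by cases x <;> simp⟩

/-- The 10-element set of formal weights: `none` represents `0`, and `some (ε₁, ε₂)`
represents the monomial `f₁(ε₁) f₂(ε₂)`. -/
abbrev Wt : Type := Option (Eps × Eps)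

/-- The join operation on exponents: `a ∨ a = a`, `e ∨ a = a ∨ e = a`, and the
clash `{+, −}` gives `none` (i.e. the factor `0`). -/
def Eps.vee : Eps → Eps → Option Eps
  | .e, a => some a
  | a, .e => some a
  | .pl, .pl => some .pl
  | .mi, .mi => some .mi
  | .pl, .mi => none
  | .mi, .pl => none

/-- The Boolean-type product `*` on the formal weight set `Wt`. -/
def wmul : Wt → Wt → Wt
  | none, _ => none
  | _, none => none
  | some (a₁, a₂), some (c₁, c₂) =>
    match a₁.vee c₁, a₂.vee c₂ with
    | some x, some y => some (x, y)
    | _, _ => none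

/-- The formal one-colored vertex weights `L̂¹(i, j; k, l) ∈ W`
(`i` = bottom input, `j` = left input, `k` = top output, `l` = right output,
with `true` standing for `1`). -/
def Lhat1 : Bool → Bool → Bool → Bool → Wt
  | true, false, true, false => some (.e, .e)
  | false, true, false, true => some (.e, .e)
  | false, false, false, false => some (.e, .pl)
  | false, false, true, true => some (.e, .mi)
  | true, true, true, true => some (.pl, .e)
  | true, true, false, false => some (.mi, .e)
  | _, _, _, _ => none

lemma tele_aux (f g : ℕ → ℕ) :
    ∀ Y, 1 ≤ Y → (∀ b, 1 ≤ b → b < Y → f (b + 1) = g b) →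
    (∑ b ∈ Finset.Icc 1 Y, f b) + g Y = f 1 + ∑ b ∈ Finset.Icc 1 Y, g b := by
  intro Y
  induction Y with
  | zero => omega
  | succ n ih =>
    intro _ h
    rcases Nat.eq_zero_or_pos n with hn | hn
    · subst hn; simp
    · rw [Finset.sum_Icc_succ_top (by omega) f, Finset.sum_Icc_succ_top (by omega) g]
      have := ih hn (fun b hb hb' => h b hb (by omega))
      have hfg : f (n + 1) = g n := h n hn (by omega)
      omega

lemma vertex_cons (i j k l : Bool) (h : Lhat1 i j k l ≠ (none : Wt)) :
    (if i then (1 : ℕ) else 0) + (if l then (1 : ℕ) else 0)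
      = (if k then (1 : ℕ) else 0) + (if j then (1 : ℕ) else 0) := by
  revert h; revert i j k l; decide

/-- Conservation of lines on a rectangle: for any family of vertex configurations of
nonzero formal weight on `[1,X] × [1,Y]` satisfying the edge compatibility relations,
the number of lines crossing the bottom and right boundaries equals the number of
lines crossing the top and left boundaries. -/
theorem one_colored_conservation
    (X Y : ℕ) (hX : 1 ≤ X) (hY : 1 ≤ Y)
    (ii jj kk ll : ℕ → ℕ → Bool)
    (hcompatV : ∀ a b, 1 ≤ a → a ≤ X → 1 ≤ b → b < Y → ii a (b + 1) = kk a b)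
    (hcompatH : ∀ a b, 1 ≤ a → a < X → 1 ≤ b → b ≤ Y → jj (a + 1) b = ll a b)
    (hadm : ∀ a b, 1 ≤ a → a ≤ X → 1 ≤ b → b ≤ Y →
      Lhat1 (ii a b) (jj a b) (kk a b) (ll a b) ≠ (none : Wt)) :
    (∑ a ∈ Finset.Icc 1 X, (if ii a 1 then (1 : ℕ) else 0)) +
        (∑ b ∈ Finset.Icc 1 Y, (if ll X b then (1 : ℕ) else 0)) =
      (∑ a ∈ Finset.Icc 1 X, (if kk a Y then (1 : ℕ) else 0)) +
        ∑ b ∈ Finset.Icc 1 Y, (if jj 1 b then (1 : ℕ) else 0) := by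
  set I : ℕ → ℕ → ℕ := fun a b => if ii a b then 1 else 0 with hI
  set J : ℕ → ℕ → ℕ := fun a b => if jj a b then 1 else 0 with hJ
  set K : ℕ → ℕ → ℕ := fun a b => if kk a b then 1 else 0 with hK
  set L : ℕ → ℕ → ℕ := fun a b => if ll a b then 1 else 0 with hL
  -- vertical telescoping per column
  have hA : (∑ a ∈ Finset.Icc 1 X, ∑ b ∈ Finset.Icc 1 Y, I a b)
      + (∑ a ∈ Finset.Icc 1 X, K a Y)
      = (∑ a ∈ Finset.Icc 1 X, I a 1)
      + (∑ a ∈ Finset.Icc 1 X, ∑ b ∈ Finset.Icc 1 Y, K a b) := by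
    rw [← Finset.sum_add_distrib, ← Finset.sum_add_distrib]
    apply Finset.sum_congr rfl
    intro a ha
    simp only [Finset.mem_Icc] at ha
    exact tele_aux (fun b => I a b) (fun b => K a b) Y hY
      (fun b hb hb' => by simp only [hI, hK, hcompatV a b ha.1 ha.2 hb hb'])
  -- horizontal telescoping per row
  have hB : (∑ b ∈ Finset.Icc 1 Y, ∑ a ∈ Finset.Icc 1 X, J a b)
      + (∑ b ∈ Finset.Icc 1 Y, L X b)
      = (∑ b ∈ Finset.Icc 1 Y, J 1 b)
      + (∑ b ∈ Finset.Icc 1 Y, ∑ a ∈ Finset.Icc 1 X, L a b) := by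
    rw [← Finset.sum_add_distrib, ← Finset.sum_add_distrib]
    apply Finset.sum_congr rfl
    intro b hb
    simp only [Finset.mem_Icc] at hb
    exact tele_aux (fun a => J a b) (fun a => L a b) X hX
      (fun a ha ha' => by simp only [hJ, hL, hcompatH a b ha ha' hb.1 hb.2])
  -- per-vertex conservation summed over the rectangle
  have hC : (∑ a ∈ Finset.Icc 1 X, ∑ b ∈ Finset.Icc 1 Y, I a b)
      + (∑ b ∈ Finset.Icc 1 Y, ∑ a ∈ Finset.Icc 1 X, L a b)
      = (∑ a ∈ Finset.Icc 1 X, ∑ b ∈ Finset.Icc 1 Y, K a b)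
      + (∑ b ∈ Finset.Icc 1 Y, ∑ a ∈ Finset.Icc 1 X, J a b) := by
    rw [Finset.sum_comm (s := Finset.Icc 1 Y) (t := Finset.Icc 1 X) (f := fun b a => L a b),
      Finset.sum_comm (s := Finset.Icc 1 Y) (t := Finset.Icc 1 X) (f := fun b a => J a b),
      ← Finset.sum_add_distrib, ← Finset.sum_add_distrib]
    apply Finset.sum_congr rfl
    intro a ha
    rw [← Finset.sum_add_distrib, ← Finset.sum_add_distrib]
    apply Finset.sum_congr rfl
    intro b hb
    simp only [Finset.mem_Icc] at ha hb
    exact vertex_cons _ _ _ _ (hadm a b ha.1 ha.2 hb.1 hb.2)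
  simp only [hI, hJ, hK, hL] at hA hB hC ⊢
  omega
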